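/- Let (S,B) be a random pair on [0,1]^2 whose joint distribution is σ-smooth (i.e., assigns each measurable set A ⊆ [0,1]^2 probability at most Leb(A)/σ). Define GFT(p) = (B - S)·1{S ≤ p ≤ B}. Then for all x, y ∈ [0,1], |E[GFT(y)] - E[GFT(x)]| ≤ |y - x|/σ. -/

import Mathlib

open MeasureTheory Set

private lemma gft_meas (p : ℝ) :
    Measurable (fun z : ℝ × ℝ => (z.2 - z.1) * (if z.1 ≤ p ∧ p ≤ z.2 then (1:ℝ) else 0)) := by
  apply (measurable_snd.sub measurable_fst).mul
  exact Measurable.ite ((measurableSet_le measurable_fst measurable_const).inter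
    (measurableSet_le measurable_const measurable_snd)) measurable_const measurable_const

private lemma key_gft (σ : ℝ) (hσ : 0 < σ)
    (μ : Measure (ℝ × ℝ)) [IsProbabilityMeasure μ]
    (hsupp : μ (Set.Icc (0:ℝ) 1 ×ˢ Set.Icc (0:ℝ) 1) = 1)
    (hsmooth : ∀ A : Set (ℝ × ℝ), MeasurableSet A →
      μ A ≤ volume A / ENNReal.ofReal σ)
    (x y : ℝ) (hx : x ∈ Set.Icc (0:ℝ) 1) (hy : y ∈ Set.Icc (0:ℝ) 1) (hxy : x ≤ y) :
    |(∫ z : ℝ × ℝ, (z.2 - z.1) * (if z.1 ≤ y ∧ y ≤ z.2 then (1:ℝ) else 0) ∂μ) -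
      ∫ z : ℝ × ℝ, (z.2 - z.1) * (if z.1 ≤ x ∧ x ≤ z.2 then (1:ℝ) else 0) ∂μ|
    ≤ |y - x| / σ := by
  obtain ⟨hx0, hx1⟩ := hx
  obtain ⟨hy0, hy1⟩ := hy
  set f : ℝ → ℝ × ℝ → ℝ :=
    fun p z => (z.2 - z.1) * (if z.1 ≤ p ∧ p ≤ z.2 then (1:ℝ) else 0) with hf
  set sq : Set (ℝ × ℝ) := Set.Icc (0:ℝ) 1 ×ˢ Set.Icc (0:ℝ) 1 with hsq
  have hsqm : MeasurableSet sq := measurableSet_Icc.prod measurableSet_Icc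
  have hae : ∀ᵐ z ∂μ, z ∈ sq := by
    rw [ae_iff]
    have : μ sqᶜ = 0 := by
      rw [measure_compl hsqm (measure_ne_top μ _), hsupp, measure_univ, tsub_self]
    exact this
  have hint : ∀ p : ℝ, Integrable (f p) μ := by
    intro p
    apply (integrable_const (1:ℝ)).mono' (gft_meas p).aestronglyMeasurable
    filter_upwards [hae] with z hz
    obtain ⟨⟨hz1, hz2⟩, hz3, hz4⟩ := hz
    by_cases h : z.1 ≤ p ∧ p ≤ z.2
    · simp only [hf, if_pos h, mul_one, Real.norm_eq_abs]
      rw [abs_le]; constructor <;> linarith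
    · simp [hf, if_neg h]
  set E : Set (ℝ × ℝ) := (Set.Ioc x y ×ˢ Set.Icc y 1) ∪ (Set.Icc 0 x ×ˢ Set.Ico x y)
    with hE
  have hEm : MeasurableSet E :=
    (measurableSet_Ioc.prod measurableSet_Icc).union (measurableSet_Icc.prod measurableSet_Ico)
  have hbound : ∀ᵐ z ∂μ, |f y z - f x z| ≤ E.indicator (fun _ => (1:ℝ)) z := by
    filter_upwards [hae] with z hz
    obtain ⟨⟨hz1, hz2⟩, hz3, hz4⟩ := hz
    by_cases h1 : z.1 ≤ y ∧ y ≤ z.2 <;> by_cases h2 : z.1 ≤ x ∧ x ≤ z.2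
    · simp only [hf, if_pos h1, if_pos h2, sub_self, abs_zero]
      exact Set.indicator_nonneg (fun _ _ => zero_le_one) _
    · have hzE : z ∈ E := by
        left
        have hxz1 : x < z.1 := by
          by_contra hc
          exact h2 ⟨le_of_not_gt hc, le_trans hxy h1.2⟩
        exact ⟨⟨hxz1, h1.1⟩, h1.2, hz4⟩
      rw [Set.indicator_of_mem hzE]
      simp only [hf, if_pos h1, if_neg h2, mul_one, mul_zero, sub_zero]
      rw [abs_le]; constructor <;> linarith [h1.1, h1.2]
    · have hzE : z ∈ E := by
        right
        have hzy : z.2 < y := by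
          by_contra hc
          exact h1 ⟨le_trans h2.1 hxy, le_of_not_gt hc⟩
        exact ⟨⟨hz1, h2.1⟩, h2.2, hzy⟩
      rw [Set.indicator_of_mem hzE]
      simp only [hf, if_neg h1, if_pos h2, mul_one, mul_zero, zero_sub, abs_neg]
      rw [abs_le]; constructor <;> linarith [h2.1, h2.2]
    · simp only [hf, if_neg h1, if_neg h2, mul_zero, sub_self, abs_zero]
      exact Set.indicator_nonneg (fun _ _ => zero_le_one) _
  have hμE : μ E ≤ ENNReal.ofReal (|y - x| / σ) := by
    have hvol : volume E ≤ ENNReal.ofReal (|y - x|) := by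
      calc volume E ≤ volume (Set.Ioc x y ×ˢ Set.Icc y 1) +
          volume (Set.Icc 0 x ×ˢ Set.Ico x y) := measure_union_le _ _
        _ = ENNReal.ofReal (y - x) * ENNReal.ofReal (1 - y) +
            ENNReal.ofReal x * ENNReal.ofReal (y - x) := by
          rw [MeasureTheory.Measure.volume_eq_prod, Measure.prod_prod, Measure.prod_prod,
            Real.volume_Ioc, Real.volume_Icc, Real.volume_Icc, Real.volume_Ico, sub_zero]
        _ = ENNReal.ofReal ((y - x) * (1 - y) + x * (y - x)) := by
          rw [← ENNReal.ofReal_mul (by linarith), ← ENNReal.ofReal_mul hx0,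
            ENNReal.ofReal_add (by nlinarith) (by nlinarith)]
        _ ≤ ENNReal.ofReal (|y - x|) := by
          apply ENNReal.ofReal_le_ofReal
          rw [abs_of_nonneg (by linarith)]
          nlinarith
    calc μ E ≤ volume E / ENNReal.ofReal σ := hsmooth E hEm
      _ ≤ ENNReal.ofReal (|y - x|) / ENNReal.ofReal σ :=
        ENNReal.div_le_div_right hvol _
      _ = ENNReal.ofReal (|y - x| / σ) := (ENNReal.ofReal_div_of_pos hσ).symm
  calc |(∫ z, f y z ∂μ) - ∫ z, f x z ∂μ|
      = |∫ z, (f y z - f x z) ∂μ| := by rw [integral_sub (hint y) (hint x)]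
    _ ≤ ∫ z, |f y z - f x z| ∂μ := by
        simpa [Real.norm_eq_abs] using
          norm_integral_le_integral_norm (fun z => f y z - f x z) (μ := μ)
    _ ≤ ∫ z, E.indicator (fun _ => (1:ℝ)) z ∂μ :=
        integral_mono_ae ((hint y).sub (hint x)).abs
          ((integrable_const (1:ℝ)).indicator hEm) hbound
    _ = (μ E).toReal := by rw [integral_indicator_const _ hEm]; simp [Measure.real]
    _ ≤ |y - x| / σ :=
        ENNReal.toReal_le_of_le_ofReal (div_nonneg (abs_nonneg _) hσ.le) hμE

/-- Lipschitzness of the expected gain from trade under a σ-smooth distribution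
on [0,1]². -/
theorem lipschitz_expected_gft
    (σ : ℝ) (hσ : 0 < σ) (hσ1 : σ ≤ 1)
    (μ : Measure (ℝ × ℝ)) [IsProbabilityMeasure μ]
    (hsupp : μ (Set.Icc (0:ℝ) 1 ×ˢ Set.Icc (0:ℝ) 1) = 1)
    (hsmooth : ∀ A : Set (ℝ × ℝ), MeasurableSet A →
      μ A ≤ volume A / ENNReal.ofReal σ)
    (x y : ℝ) (hx : x ∈ Set.Icc (0:ℝ) 1) (hy : y ∈ Set.Icc (0:ℝ) 1) :
    |(∫ z : ℝ × ℝ, (z.2 - z.1) * (if z.1 ≤ y ∧ y ≤ z.2 then (1:ℝ) else 0) ∂μ) -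
      ∫ z : ℝ × ℝ, (z.2 - z.1) * (if z.1 ≤ x ∧ x ≤ z.2 then (1:ℝ) else 0) ∂μ|
    ≤ |y - x| / σ := by
  rcases le_total x y with h | h
  · exact key_gft σ hσ μ hsupp hsmooth x y hx hy h
  · rw [abs_sub_comm, abs_sub_comm y x]
    exact key_gft σ hσ μ hsupp hsmooth y x hy hx h
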